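/- Let α be a real number with α ∉ ℤ. For every sequence x : ℕ → ℝ, applying the operator Δ^(α) to the sequence Δ^(−α)x returns x; that is, for every n, ∑_{j=0}^{n} Δ^(α)_{nj} · (∑_{k=0}^{j} Δ^(−α)_{jk} x_k) = x_n. -/
import Mathlib


open Filter Finset Topology

/-- The fractional difference matrix `Δ^(α)`:
`Δ^(α)_{nk} = (−1)^{n−k} Γ(α+1)/((n−k)!·Γ(α−n+k+1))` for `k ≤ n`, and `0` for `k > n`. -/
noncomputable def fracDelta (α : ℝ) (n k : ℕ) : ℝ :=
  if k ≤ n then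
    (-1 : ℝ) ^ (n - k) * Real.Gamma (α + 1) /
      ((Nat.factorial (n - k) : ℝ) * Real.Gamma (α - n + k + 1))
  else 0

/-- `(Δ^(α)x)_n = ∑_{k=0}^n Δ^(α)_{nk} x_k`. -/
noncomputable def fracDeltaSeq (α : ℝ) (x : ℕ → ℝ) (n : ℕ) : ℝ :=
  ∑ k ∈ Finset.range (n + 1), fracDelta α n k * x k

lemma fracDelta_zero_of_lt (α : ℝ) {n k : ℕ} (h : ¬ k ≤ n) : fracDelta α n k = 0 := by
  simp only [fracDelta, if_neg h]

open Polynomial in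
lemma descP_smeval_succ (α : ℝ) (m : ℕ) :
    (descPochhammer ℤ (m + 1)).smeval α = (descPochhammer ℤ m).smeval α * (α - m) := by
  simp [descPochhammer_succ_right, smeval_mul, smeval_sub, smeval_X, smeval_natCast]

open Polynomial in
lemma gamma_descP (α : ℝ) (hα : ∀ m : ℤ, α ≠ (m : ℝ)) (m : ℕ) :
    Real.Gamma (α + 1) = (descPochhammer ℤ m).smeval α * Real.Gamma (α - m + 1) := by
  induction m with
  | zero => simp [smeval_one]
  | succ m ih =>
    have h1 : α - m ≠ 0 := by
      intro h
      apply hα m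
      push_cast
      linarith
    have h2 : Real.Gamma (α - m + 1) = (α - m) * Real.Gamma (α - m) := Real.Gamma_add_one h1
    have h3 : α - ((m : ℕ) + 1 : ℕ) + 1 = α - m := by push_cast; ring
    rw [descP_smeval_succ, h3, ih, h2]
    ring

lemma gamma_arg_ne_zero (α : ℝ) (hα : ∀ m : ℤ, α ≠ (m : ℝ)) (m : ℕ) :
    Real.Gamma (α - m + 1) ≠ 0 := by
  apply Real.Gamma_ne_zero
  intro j h
  apply hα ((m : ℤ) - 1 - j)
  push_cast
  linarith

lemma fracDelta_eq_choose (α : ℝ) (hα : ∀ m : ℤ, α ≠ (m : ℝ)) {n k : ℕ} (hk : k ≤ n) :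
    fracDelta α n k = (-1 : ℝ) ^ (n - k) * Ring.choose α (n - k) := by
  have hcast : α - n + k + 1 = α - (n - k : ℕ) + 1 := by
    push_cast [Nat.cast_sub hk]; ring
  have hΓ : Real.Gamma (α - (n - k : ℕ) + 1) ≠ 0 := gamma_arg_ne_zero α hα _
  have hfac : ((n - k).factorial : ℝ) ≠ 0 := by positivity
  simp only [fracDelta, if_pos hk, hcast, gamma_descP α hα (n - k),
    Ring.descPochhammer_eq_factorial_smul_choose, nsmul_eq_mul]
  rw [div_eq_iff (mul_ne_zero hfac hΓ)]
  ring

lemma choose_conv (α : ℝ) (M : ℕ) :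
    ∑ m ∈ Finset.range (M + 1), Ring.choose (-α) m * Ring.choose α (M - m)
      = if M = 0 then 1 else 0 := by
  have h := Ring.add_choose_eq (r := -α) (s := α) M (Commute.all _ _)
  rw [neg_add_cancel, Ring.choose_zero_ite,
    Finset.Nat.sum_antidiagonal_eq_sum_range_succ_mk
      (fun ij => Ring.choose (-α) ij.1 * Ring.choose α ij.2)] at h
  exact h.symm

lemma conv_delta (α : ℝ) (hα : ∀ m : ℤ, α ≠ (m : ℝ)) {n k : ℕ} (hkn : k ≤ n) :
    ∑ j ∈ Finset.range (n + 1), fracDelta α n j * fracDelta (-α) j k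
      = if k = n then 1 else 0 := by
  have hα' : ∀ m : ℤ, -α ≠ (m : ℝ) := by
    intro m h
    exact hα (-m) (by push_cast; linarith)
  have h1 : ∑ j ∈ Finset.range (n + 1), fracDelta α n j * fracDelta (-α) j k
      = ∑ j ∈ Finset.Ico k (n + 1), fracDelta α n j * fracDelta (-α) j k := by
    symm
    apply Finset.sum_subset
    · intro j hj
      simp only [Finset.mem_Ico] at hj
      exact Finset.mem_range.2 hj.2
    · intro j hj hj'
      simp only [Finset.mem_range] at hj
      simp only [Finset.mem_Ico] at hj'
      have : ¬ k ≤ j := by omega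
      rw [fracDelta_zero_of_lt (-α) this, mul_zero]
  rw [h1, Finset.sum_Ico_eq_sum_range]
  have hM : n + 1 - k = (n - k) + 1 := by omega
  rw [hM]
  set M := n - k with hMdef
  have h2 : ∀ m ∈ Finset.range (M + 1),
      fracDelta α n (k + m) * fracDelta (-α) (k + m) k
        = (-1 : ℝ) ^ M * (Ring.choose (-α) m * Ring.choose α (M - m)) := by
    intro m hm
    have hmM : m ≤ M := by simpa [Nat.lt_succ_iff] using hm
    have hk1 : k + m ≤ n := by omega
    have hk2 : k ≤ k + m := Nat.le_add_right k m
    rw [fracDelta_eq_choose α hα hk1, fracDelta_eq_choose (-α) hα' hk2]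
    have e1 : n - (k + m) = M - m := by omega
    have e2 : k + m - k = m := by omega
    have e3 : (-1 : ℝ) ^ (M - m) * (-1 : ℝ) ^ m = (-1 : ℝ) ^ M := by
      rw [← pow_add]
      congr 1
      omega
    rw [e1, e2, ← e3]
    ring
  rw [Finset.sum_congr rfl h2, ← Finset.mul_sum, choose_conv]
  by_cases hkn' : k = n
  · have : M = 0 := by omega
    simp [hkn', this]
  · have : M ≠ 0 := by omega
    simp [hkn', this]

/-- `Δ^(α)(Δ^(−α) x) = x` for every sequence `x`. -/
theorem fracDelta_apply_fracDelta_neg_apply (α : ℝ) (hα : ∀ m : ℤ, α ≠ (m : ℝ)) :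
    ∀ (x : ℕ → ℝ) (n : ℕ),
      ∑ j ∈ Finset.range (n + 1),
        fracDelta α n j * (∑ k ∈ Finset.range (j + 1), fracDelta (-α) j k * x k) = x n := by
  intro x n
  have step1 : ∀ j ∈ Finset.range (n + 1),
      fracDelta α n j * (∑ k ∈ Finset.range (j + 1), fracDelta (-α) j k * x k)
        = ∑ k ∈ Finset.range (n + 1), fracDelta α n j * (fracDelta (-α) j k * x k) := by
    intro j hj
    simp only [Finset.mem_range] at hj
    rw [Finset.mul_sum]
    apply Finset.sum_subset
    · exact Finset.range_subset_range.2 (by omega)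
    · intro k hk hk'
      simp only [Finset.mem_range] at hk'
      have : ¬ k ≤ j := by omega
      rw [fracDelta_zero_of_lt (-α) this]
      ring
  rw [Finset.sum_congr rfl step1, Finset.sum_comm]
  have step2 : ∀ k ∈ Finset.range (n + 1),
      ∑ j ∈ Finset.range (n + 1), fracDelta α n j * (fracDelta (-α) j k * x k)
        = (if k = n then 1 else 0) * x k := by
    intro k hk
    have hkn : k ≤ n := by simpa [Nat.lt_succ_iff] using hk
    have : ∑ j ∈ Finset.range (n + 1), fracDelta α n j * (fracDelta (-α) j k * x k)
        = (∑ j ∈ Finset.range (n + 1), fracDelta α n j * fracDelta (-α) j k) * x k := by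
      rw [Finset.sum_mul]
      exact Finset.sum_congr rfl fun j _ => by ring
    rw [this, conv_delta α hα hkn]
  rw [Finset.sum_congr rfl step2]
  simp
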